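/- Let n ≥ 2 be a natural number and let λ > 0, λ_e > 0, c > 0 be real numbers. Let v : ℕ → ℝ satisfy, for every j with 1 ≤ j ≤ n, the recursion v(j) = (λ_e + j(n−j)·(λ/(n−1) + λ/(c·ln n))·v(j+1)) / (j·λ/n + j·λ/(c·ln n) + j(n−j)·(λ/(n−1) + λ/(c·ln n))). Then v(1) ≤ 2·c·λ_e·(ln n + 1)·ln n/(λ·(n−1)) + c·λ_e·ln n/(λ·(c·ln n + n)). -/

import Mathlib

open Finset

noncomputable def gossipTerm (n : ℕ) (lam lamE c : ℝ) (i : ℕ) : ℝ :=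
  lamE * c * Real.log n / (lam * i * ((n : ℝ) - i))

noncomputable def gossipSum (n : ℕ) (lam lamE c : ℝ) (j : ℕ) : ℝ :=
  ∑ i ∈ Finset.Ico j n, gossipTerm n lam lamE c i

private lemma harm_cast (m : ℕ) :
    ∑ i ∈ Finset.Ico 1 (m + 1), (1 : ℝ) / (i : ℝ) = (harmonic m : ℝ) := by
  rw [harmonic, Finset.sum_Ico_eq_sum_range]
  push_cast
  simp only [Nat.add_sub_cancel, one_div]
  exact Finset.sum_congr rfl (fun i _ => by rw [add_comm])

private lemma refl_sum (n : ℕ) :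
    ∑ i ∈ Finset.Ico 1 n, (1 : ℝ) / ((n : ℝ) - (i : ℝ))
      = ∑ i ∈ Finset.Ico 1 n, (1 : ℝ) / (i : ℝ) := by
  apply Finset.sum_nbij' (fun i => n - i) (fun i => n - i)
  · intro a ha; simp only [Finset.mem_Ico] at ha ⊢; omega
  · intro a ha; simp only [Finset.mem_Ico] at ha ⊢; omega
  · intro a ha; simp only [Finset.mem_Ico] at ha; omega
  · intro a ha; simp only [Finset.mem_Ico] at ha; omega
  · intro a ha
    simp only [Finset.mem_Ico] at ha
    have : ((n - a : ℕ) : ℝ) = (n : ℝ) - (a : ℝ) := by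
      push_cast [Nat.cast_sub (le_of_lt ha.2)]; ring
    rw [this]

set_option maxHeartbeats 1000000 in
/-- Upper bound on the average version age of a single node in a fully connected
gossip network with contact-mobility scaling `f(n) = c·ln n`. -/
theorem stmt_4 (n : ℕ) (hn : 2 ≤ n) (lam lamE c : ℝ) (hlam : 0 < lam) (hlamE : 0 < lamE)
    (hc : 0 < c) (v : ℕ → ℝ)
    (hv : ∀ j : ℕ, 1 ≤ j → j ≤ n →
      v j = (lamE + (j : ℝ) * ((n : ℝ) - j) * (lam / ((n : ℝ) - 1) + lam / (c * Real.log n))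
              * v (j + 1)) /
        ((j : ℝ) * lam / n + (j : ℝ) * lam / (c * Real.log n)
          + (j : ℝ) * ((n : ℝ) - j) * (lam / ((n : ℝ) - 1) + lam / (c * Real.log n)))) :
    v 1 ≤ 2 * c * lamE * (Real.log n + 1) * Real.log n / (lam * ((n : ℝ) - 1))
        + c * lamE * Real.log n / (lam * (c * Real.log n + n)) := by
  have hn1 : (1 : ℝ) < (n : ℝ) := by exact_mod_cast hn.trans_lt' (by norm_num)
  have hL : 0 < Real.log n := Real.log_pos hn1
  have hcL : 0 < c * Real.log n := mul_pos hc hL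
  have hnR : (0 : ℝ) < n := by positivity
  have hn1R : (0 : ℝ) < (n : ℝ) - 1 := by linarith
  obtain ⟨V, hVdef⟩ : ∃ V : ℝ, V = c * lamE * Real.log n / (lam * (c * Real.log n + n)) :=
    ⟨_, rfl⟩
  have hVpos : 0 < V := by
    rw [hVdef]
    apply div_pos (by positivity) (mul_pos hlam (by positivity))
  -- value at n
  have hvn : v n = V := by
    have h := hv n (by omega) le_rfl
    have hz : (n : ℝ) - (n : ℝ) = 0 := by ring
    rw [hz, mul_zero, zero_mul, zero_mul, add_zero, add_zero] at h
    rw [h, hVdef]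
    rw [div_eq_div_iff (by positivity) (mul_pos hlam (by positivity)).ne']
    field_simp
  have hfnonneg : ∀ i, 1 ≤ i → i < n → 0 ≤ gossipTerm n lam lamE c i := by
    intro i h1 h2
    have h1' : (1 : ℝ) ≤ (i : ℝ) := by exact_mod_cast h1
    have h2' : (i : ℝ) < (n : ℝ) := by exact_mod_cast h2
    have : 0 < (n : ℝ) - i := by linarith
    unfold gossipTerm
    positivity
  have hSnonneg : ∀ j, 1 ≤ j → 0 ≤ gossipSum n lam lamE c j := by
    intro j hj
    apply Finset.sum_nonneg
    intro i hi
    simp only [Finset.mem_Ico] at hi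
    exact hfnonneg i (by omega) hi.2
  -- key downward induction
  have key : ∀ k j, 1 ≤ j → j ≤ n → n - j = k → v j ≤ gossipSum n lam lamE c j + V := by
    intro k
    induction k with
    | zero =>
      intro j hj1 hj2 hjk
      have hjn : j = n := by omega
      subst hjn
      rw [gossipSum, Finset.Ico_self, Finset.sum_empty, zero_add, hvn]
    | succ m ih =>
      intro j hj1 hj2 hjk
      have hjn : j < n := by omega
      have hIH : v (j + 1) ≤ gossipSum n lam lamE c (j + 1) + V :=
        ih (j + 1) (by omega) (by omega) (by omega)
      have hjR : (1 : ℝ) ≤ (j : ℝ) := by exact_mod_cast hj1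
      have hnj : (1 : ℝ) ≤ (n : ℝ) - j := by
        have : ((j : ℝ) + 1) ≤ (n : ℝ) := by exact_mod_cast hjn
        linarith
      obtain ⟨A, hAdef⟩ : ∃ A : ℝ,
          A = (j : ℝ) * ((n : ℝ) - j) * (lam / ((n : ℝ) - 1) + lam / (c * Real.log n)) :=
        ⟨_, rfl⟩
      obtain ⟨B, hBdef⟩ : ∃ B : ℝ,
          B = (j : ℝ) * lam / n + (j : ℝ) * lam / (c * Real.log n) := ⟨_, rfl⟩
      have hApos : 0 < A := by
        rw [hAdef]
        apply mul_pos (by nlinarith)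
        positivity
      have hBpos : 0 < B := by rw [hBdef]; positivity
      have hBd : 0 ≤ gossipSum n lam lamE c (j + 1) + V :=
        add_nonneg (hSnonneg (j + 1) (by omega)) hVpos.le
      have hnum : lamE + A * v (j + 1) ≤ lamE + A * (gossipSum n lam lamE c (j + 1) + V) := by
        have := mul_le_mul_of_nonneg_left hIH hApos.le
        linarith
      have step1 : v j ≤ (lamE + A * (gossipSum n lam lamE c (j + 1) + V)) / (B + A) := by
        rw [hv j hj1 hjn.le, ← hAdef, ← hBdef]
        exact (div_le_div_iff_of_pos_right (by linarith)).mpr hnum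
      have step2 : (lamE + A * (gossipSum n lam lamE c (j + 1) + V)) / (B + A)
          ≤ (lamE + A * (gossipSum n lam lamE c (j + 1) + V)) / A :=
        div_le_div_of_nonneg_left (by nlinarith) hApos (by linarith)
      have step3 : (lamE + A * (gossipSum n lam lamE c (j + 1) + V)) / A
          = lamE / A + (gossipSum n lam lamE c (j + 1) + V) := by
        field_simp
      have step4 : lamE / A ≤ gossipTerm n lam lamE c j := by
        have hA2pos : 0 < (j : ℝ) * ((n : ℝ) - j) * (lam / (c * Real.log n)) := by
          apply mul_pos (by nlinarith); positivity
        have hA2 : (j : ℝ) * ((n : ℝ) - j) * (lam / (c * Real.log n)) ≤ A := by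
          rw [hAdef]
          apply mul_le_mul_of_nonneg_left _ (by nlinarith)
          have : 0 ≤ lam / ((n : ℝ) - 1) := by positivity
          linarith
        calc lamE / A ≤ lamE / ((j : ℝ) * ((n : ℝ) - j) * (lam / (c * Real.log n))) :=
              div_le_div_of_nonneg_left hlamE.le hA2pos hA2
          _ = gossipTerm n lam lamE c j := by
              unfold gossipTerm
              rw [show (j : ℝ) * ((n : ℝ) - j) * (lam / (c * Real.log n))
                    = lam * j * ((n : ℝ) - j) / (c * Real.log n) by ring,
                 div_div_eq_mul_div]
              rw [show lamE * (c * Real.log n) = lamE * c * Real.log n by ring]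
      have hSsplit : gossipSum n lam lamE c j
          = gossipTerm n lam lamE c j + gossipSum n lam lamE c (j + 1) := by
        rw [gossipSum, gossipSum]
        exact Finset.sum_eq_sum_Ico_succ_bot hjn _
      calc v j ≤ (lamE + A * (gossipSum n lam lamE c (j + 1) + V)) / (B + A) := step1
        _ ≤ (lamE + A * (gossipSum n lam lamE c (j + 1) + V)) / A := step2
        _ = lamE / A + (gossipSum n lam lamE c (j + 1) + V) := step3
        _ ≤ gossipTerm n lam lamE c j + (gossipSum n lam lamE c (j + 1) + V) := by linarith
        _ = gossipSum n lam lamE c j + V := by rw [hSsplit]; ring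
  have hv1 : v 1 ≤ gossipSum n lam lamE c 1 + V := key (n - 1) 1 le_rfl (by omega) rfl
  -- bound the sum
  have hK : ∀ i ∈ Finset.Ico 1 n, gossipTerm n lam lamE c i
      ≤ lamE * c * Real.log n / (lam * ((n : ℝ) - 1)) * (1 / (i : ℝ) + 1 / ((n : ℝ) - i)) := by
    intro i hi
    simp only [Finset.mem_Ico] at hi
    have h1 : (1 : ℝ) ≤ (i : ℝ) := by exact_mod_cast hi.1
    have h3 : (1 : ℝ) ≤ (n : ℝ) - i := by
      have : ((i : ℝ) + 1) ≤ (n : ℝ) := by exact_mod_cast hi.2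
      linarith
    have hi0 : (0 : ℝ) < (i : ℝ) := by linarith
    have hni0 : (0 : ℝ) < (n : ℝ) - i := by linarith
    have hsum : 1 / (i : ℝ) + 1 / ((n : ℝ) - i) = (n : ℝ) / ((i : ℝ) * ((n : ℝ) - i)) := by
      field_simp
      ring
    rw [hsum]
    unfold gossipTerm
    have d1 : (0 : ℝ) < lam * (i : ℝ) * ((n : ℝ) - i) := mul_pos (mul_pos hlam hi0) hni0
    have d2 : (0 : ℝ) < lam * ((n : ℝ) - 1) * ((i : ℝ) * ((n : ℝ) - i)) :=
      mul_pos (mul_pos hlam hn1R) (mul_pos hi0 hni0)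
    rw [div_mul_div_comm, div_le_div_iff₀ d1 d2]
    have hkey : lamE * c * Real.log n * ((n : ℝ) - 1) ≤ lamE * c * Real.log n * n := by
      have := mul_le_mul_of_nonneg_left (show (n : ℝ) - 1 ≤ n by linarith)
        (show 0 ≤ lamE * c * Real.log n by positivity)
      linarith
    have hQ : (0 : ℝ) ≤ lam * ((i : ℝ) * ((n : ℝ) - i)) :=
      (mul_pos hlam (mul_pos hi0 hni0)).le
    nlinarith [mul_le_mul_of_nonneg_right hkey hQ]
  have hharm : ∑ i ∈ Finset.Ico 1 n, (1 : ℝ) / (i : ℝ) ≤ Real.log n + 1 := by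
    have hm : n - 1 + 1 = n := by omega
    have hb := harmonic_le_one_add_log (n - 1)
    have hcast := harm_cast (n - 1)
    rw [hm] at hcast
    rw [hcast]
    have hlog : Real.log ((n : ℝ) - 1) ≤ Real.log n := by
      apply Real.log_le_log (by linarith) (by linarith)
    have hcast2 : ((n - 1 : ℕ) : ℝ) = (n : ℝ) - 1 := by
      push_cast [Nat.cast_sub (by omega : 1 ≤ n)]; ring
    rw [hcast2] at hb
    linarith
  have hS1 : gossipSum n lam lamE c 1
      ≤ lamE * c * Real.log n / (lam * ((n : ℝ) - 1)) * (2 * (Real.log n + 1)) := by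
    calc gossipSum n lam lamE c 1
        ≤ ∑ i ∈ Finset.Ico 1 n, lamE * c * Real.log n / (lam * ((n : ℝ) - 1))
            * (1 / (i : ℝ) + 1 / ((n : ℝ) - i)) := Finset.sum_le_sum hK
      _ = lamE * c * Real.log n / (lam * ((n : ℝ) - 1)) *
            ((∑ i ∈ Finset.Ico 1 n, 1 / (i : ℝ))
              + ∑ i ∈ Finset.Ico 1 n, 1 / ((n : ℝ) - i)) := by
            rw [← Finset.mul_sum, Finset.sum_add_distrib]
      _ = lamE * c * Real.log n / (lam * ((n : ℝ) - 1)) *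
            (2 * ∑ i ∈ Finset.Ico 1 n, 1 / (i : ℝ)) := by
            rw [refl_sum n]; ring
      _ ≤ lamE * c * Real.log n / (lam * ((n : ℝ) - 1)) * (2 * (Real.log n + 1)) := by
            apply mul_le_mul_of_nonneg_left _ (by positivity)
            linarith
  have hfinal : lamE * c * Real.log n / (lam * ((n : ℝ) - 1)) * (2 * (Real.log n + 1))
      = 2 * c * lamE * (Real.log n + 1) * Real.log n / (lam * ((n : ℝ) - 1)) := by
    field_simp
  rw [hfinal] at hS1
  rw [hVdef] at hv1
  linarith
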